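/- ι(C11, P3) = 3, that is, the 11-cycle has P3-isolation number exactly 3. -/
import Mathlib

open SimpleGraph

/-- `G` contains a copy of the 3-vertex path as a (not necessarily induced) subgraph. -/
def containsP3 {V : Type*} (G : SimpleGraph V) : Prop :=
  ∃ f : Fin 3 → V, Function.Injective f ∧
    ∀ a b, (SimpleGraph.pathGraph 3).Adj a b → G.Adj (f a) (f b)

/-- The closed neighbourhood `N[D]` of a set of vertices `D`. -/
def closedNbhd {V : Type*} (G : SimpleGraph V) (D : Set V) : Set V :=
  {v | v ∈ D ∨ ∃ d ∈ D, G.Adj d v}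

/-- `D` is a `P3`-isolating set of `G`: `G - N[D]` contains no copy of `P3`. -/
def IsP3Isolating {V : Type*} (G : SimpleGraph V) (D : Set V) : Prop :=
  ¬ containsP3 (G.induce (closedNbhd G D)ᶜ)

/-- The `P3`-isolation number `ι(G, P3)`. -/
noncomputable def iotaP3 {V : Type*} (G : SimpleGraph V) : ℕ :=
  sInf {n | ∃ D : Finset V, D.card = n ∧ IsP3Isolating G ↑D}

def D3 : Finset (Fin 11) := {0, 4, 8}

lemma comp_eq : ∀ v : Fin 11, ¬(v ∈ D3 ∨ ∃ d ∈ D3, (cycleGraph 11).Adj d v) → v = 2 ∨ v = 6 := by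
  decide

lemma key (d1 d2 : Fin 11) : ∃ i : Fin 11, ∀ k : Fin 11,
    (k = i ∨ k = i + 1 ∨ k = i + 2) →
    k ≠ d1 ∧ k ≠ d2 ∧ ¬(cycleGraph 11).Adj d1 k ∧ ¬(cycleGraph 11).Adj d2 k := by
  revert d1 d2; decide

lemma mem_cn_iff (D : Finset (Fin 11)) (v : Fin 11) :
    v ∈ closedNbhd (cycleGraph 11) ↑D ↔ (v ∈ D ∨ ∃ d ∈ D, (cycleGraph 11).Adj d v) := by
  simp [closedNbhd]

lemma upper : IsP3Isolating (cycleGraph 11) ↑D3 := by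
  rintro ⟨f, hinj, -⟩
  have hv : ∀ k : Fin 3, ((f k : Fin 11) = 2 ∨ (f k : Fin 11) = 6) := by
    intro k
    apply comp_eq
    have := (f k).2
    rw [Set.mem_compl_iff, mem_cn_iff] at this
    exact this
  have h2 : ∃ a b : Fin 3, a ≠ b ∧ (f a : Fin 11) = (f b : Fin 11) := by
    rcases hv 0 with h0 | h0 <;> rcases hv 1 with h1 | h1 <;> rcases hv 2 with h2 | h2
    · exact ⟨0, 1, by decide, by rw [h0, h1]⟩
    · exact ⟨0, 1, by decide, by rw [h0, h1]⟩
    · exact ⟨0, 2, by decide, by rw [h0, h2]⟩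
    · exact ⟨1, 2, by decide, by rw [h1, h2]⟩
    · exact ⟨1, 2, by decide, by rw [h1, h2]⟩
    · exact ⟨0, 2, by decide, by rw [h0, h2]⟩
    · exact ⟨0, 1, by decide, by rw [h0, h1]⟩
    · exact ⟨0, 1, by decide, by rw [h0, h1]⟩
  obtain ⟨a, b, hab, he⟩ := h2
  exact hab (hinj (Subtype.ext he))

lemma adjStep (i : Fin 11) : (cycleGraph 11).Adj i (i + 1) := by
  rw [cycleGraph_adj]; right; exact add_sub_cancel_left i 1

lemma lower (D : Finset (Fin 11)) (hD : D.card ≤ 2) :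
    ¬ IsP3Isolating (cycleGraph 11) ↑D := by
  obtain ⟨a, b, hsub⟩ : ∃ a b : Fin 11, D ⊆ {a, b} := by
    interval_cases h : D.card
    · exact ⟨0, 0, by simp [Finset.card_eq_zero.mp h]⟩
    · obtain ⟨a, ha⟩ := Finset.card_eq_one.mp h
      exact ⟨a, a, by simp [ha]⟩
    · obtain ⟨a, b, -, hab⟩ := Finset.card_eq_two.mp h
      exact ⟨a, b, by simp [hab]⟩
  obtain ⟨i, hi⟩ := key a b
  intro hiso
  apply hiso
  have hmem : ∀ v : Fin 11, (v = i ∨ v = i + 1 ∨ v = i + 2) →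
      v ∈ (closedNbhd (cycleGraph 11) ↑D)ᶜ := by
    intro v hv
    obtain ⟨h1, h2, h3, h4⟩ := hi v hv
    rw [Set.mem_compl_iff, mem_cn_iff]
    rintro (hd | ⟨d, hd, hadj⟩)
    · have h' := hsub hd
      simp only [Finset.mem_insert, Finset.mem_singleton] at h'
      rcases h' with h | h <;> simp_all
    · have h' := hsub hd
      simp only [Finset.mem_insert, Finset.mem_singleton] at h'
      rcases h' with h | h <;> simp_all
  have hne1 : i ≠ i + 1 := fun h => by
    have h' : i + 0 = i + 1 := by rw [add_zero]; exact h
    exact absurd (add_left_cancel h') (by decide)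
  have hne2 : i ≠ i + 2 := fun h => by
    have h' : i + 0 = i + 2 := by rw [add_zero]; exact h
    exact absurd (add_left_cancel h') (by decide)
  have hne3 : i + 1 ≠ i + 2 := fun h =>
    absurd (add_left_cancel h) (by decide)
  refine ⟨![⟨i, hmem i (by tauto)⟩, ⟨i + 1, hmem _ (by tauto)⟩, ⟨i + 2, hmem _ (by tauto)⟩],
    ?_, ?_⟩
  · intro x y hxy
    fin_cases x <;> fin_cases y <;> simp_all [Subtype.ext_iff]
  · intro x y hxy
    rw [pathGraph_adj] at hxy
    fin_cases x <;> fin_cases y <;> simp_all [SimpleGraph.comap]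
    · exact adjStep i
    · exact (adjStep i).symm
    · have := adjStep (i + 1); rw [add_assoc] at this; exact this
    · have := (adjStep (i + 1)).symm; rw [add_assoc] at this; exact this

theorem stmt9 : iotaP3 (SimpleGraph.cycleGraph 11) = 3 := by
  have h3 : 3 ∈ {n | ∃ D : Finset (Fin 11), D.card = n ∧ IsP3Isolating (cycleGraph 11) ↑D} :=
    ⟨D3, by decide, upper⟩
  refine le_antisymm (Nat.sInf_le h3) (le_csInf ⟨3, h3⟩ ?_)
  rintro n ⟨D, hcard, hiso⟩
  by_contra h
  push_neg at h
  exact lower D (by omega) hiso
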